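/- arXiv:1502.02082 — 4 statements merged into one kernel-verified Lean document; each statement's English description precedes it below -/
import Mathlib

section
/- Let n ≥ 2 be an integer. Let a_k, b_k, r_k (k = 1,…,n) be reals with a_k ≥ 0, b_k ≥ 0, r_k ≥ 0 and r_k² ≤ a_k·b_k for every k, and let λ_1 ≥ λ_2 ≥ … ≥ λ_{2n} ≥ 0 be reals such that the polynomial identity ∏_{k=1}^n ((x − a_k)(x − b_k) − r_k²) = ∏_{i=1}^{2n} (x − λ_i) holds (i.e., the X-matrix with these parameters has spectrum {λ_1,…,λ_{2n}}). Then for every k ∈ {1,…,n}: 2·( r_k − ∑_{j≠k} √(a_j·b_j) ) ≤ λ_1 − λ_{n+1} − 2·∑_{ℓ=2}^n √(λ_ℓ·λ_{2n+2−ℓ}). Consequently, the genuine multipartite concurrence 2·max{0, max_k ( r_k − ∑_{j≠k} √(a_j b_j) )} of any N-qubit X-state with spectrum λ_1 ≥ … ≥ λ_{2n} (n = 2^{N−1}) is at most max{0, λ_1 − λ_{n+1} − 2·∑_{ℓ=2}^n √(λ_ℓ λ_{2n+2−ℓ})}. -/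
open Polynomial

noncomputable def pSum (P : Multiset (ℝ × ℝ)) : ℝ :=
  (P.map (fun z => Real.sqrt (z.1 * z.2))).sum

def pU (P : Multiset (ℝ × ℝ)) : Multiset ℝ := P.map Prod.fst + P.map Prod.snd

lemma pU_cons (z : ℝ × ℝ) (P : Multiset (ℝ × ℝ)) :
    pU (z ::ₘ P) = z.1 ::ₘ z.2 ::ₘ pU P := by
  simp [pU, Multiset.cons_add, Multiset.add_cons]
  rw [Multiset.cons_swap]

lemma pSum_cons (z : ℝ × ℝ) (P : Multiset (ℝ × ℝ)) :
    pSum (z ::ₘ P) = Real.sqrt (z.1 * z.2) + pSum P := by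
  simp [pSum]

lemma mem_pU {x : ℝ} {P : Multiset (ℝ × ℝ)} (h : x ∈ pU P) :
    ∃ z ∈ P, z.1 = x ∨ z.2 = x := by
  rcases Multiset.mem_add.1 h with h | h <;> rcases Multiset.mem_map.1 h with ⟨z, hz, hzx⟩
  exacts [⟨z, hz, Or.inl hzx⟩, ⟨z, hz, Or.inr hzx⟩]

lemma fst_mem_pU {z : ℝ × ℝ} {P : Multiset (ℝ × ℝ)} (h : z ∈ P) : z.1 ∈ pU P :=
  Multiset.mem_add.2 (Or.inl (Multiset.mem_map_of_mem _ h))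

lemma snd_mem_pU {z : ℝ × ℝ} {P : Multiset (ℝ × ℝ)} (h : z ∈ P) : z.2 ∈ pU P :=
  Multiset.mem_add.2 (Or.inr (Multiset.mem_map_of_mem _ h))

lemma card_pU (P : Multiset (ℝ × ℝ)) : Multiset.card (pU P) = 2 * Multiset.card P := by
  simp [pU]; ring

lemma mrange_succ' (n : ℕ) :
    Multiset.range (n+1) = 0 ::ₘ (Multiset.range n).map (· + 1) := by
  have := List.range_succ_eq_map (n := n)
  simp only [Multiset.range]
  rw [this]
  simp

lemma sqS1 {p w v : ℝ} (hv : 0 ≤ v) (hpw : p ≤ w) :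
    p - 2*Real.sqrt (w*v) ≤ w - 2*Real.sqrt (p*v) := by
  have := Real.sqrt_le_sqrt (mul_le_mul_of_nonneg_right hpw hv)
  linarith

lemma sqS2 {d y x : ℝ} (hd : 0 ≤ d) (hdy : d ≤ y) (hyx : y ≤ x) :
    y - d ≤ 2*(Real.sqrt (x*y) - Real.sqrt (x*d)) := by
  have h0y : (0:ℝ) ≤ y := le_trans hd hdy
  have h0x : (0:ℝ) ≤ x := le_trans h0y hyx
  rw [Real.sqrt_mul h0x, Real.sqrt_mul h0x]
  have e1 := Real.sq_sqrt hd
  have e2 := Real.sq_sqrt h0y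
  have l1 : Real.sqrt d ≤ Real.sqrt y := Real.sqrt_le_sqrt hdy
  have l2 : Real.sqrt y ≤ Real.sqrt x := Real.sqrt_le_sqrt hyx
  nlinarith [Real.sqrt_nonneg d, Real.sqrt_nonneg y, Real.sqrt_nonneg x]

lemma sqS3 {d x q : ℝ} (hd : 0 ≤ d) (hdx : d ≤ x) (hxq : x ≤ q) :
    x - q ≤ 2*(Real.sqrt (x*d) - Real.sqrt (q*d)) := by
  have h0x : (0:ℝ) ≤ x := le_trans hd hdx
  have h0q : (0:ℝ) ≤ q := le_trans h0x hxq
  rw [Real.sqrt_mul h0x, Real.sqrt_mul h0q]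
  have e1 := Real.sq_sqrt h0x
  have e2 := Real.sq_sqrt h0q
  have l1 : Real.sqrt d ≤ Real.sqrt x := Real.sqrt_le_sqrt hdx
  have l2 : Real.sqrt x ≤ Real.sqrt q := Real.sqrt_le_sqrt hxq
  nlinarith [Real.sqrt_nonneg d, Real.sqrt_nonneg x, Real.sqrt_nonneg q]

lemma sqS4 {x β d v : ℝ} (hd : 0 ≤ d) (hx : 0 ≤ x) (hxβ : x ≤ β) (hdv : d ≤ v) :
    Real.sqrt (β*d) + Real.sqrt (x*v) ≤ Real.sqrt (x*d) + Real.sqrt (β*v) := by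
  have h0β : (0:ℝ) ≤ β := le_trans hx hxβ
  have h0v : (0:ℝ) ≤ v := le_trans hd hdv
  rw [Real.sqrt_mul h0β, Real.sqrt_mul hx, Real.sqrt_mul hx, Real.sqrt_mul h0β]
  have l1 : Real.sqrt x ≤ Real.sqrt β := Real.sqrt_le_sqrt hxβ
  have l2 : Real.sqrt d ≤ Real.sqrt v := Real.sqrt_le_sqrt hdv
  nlinarith [Real.sqrt_nonneg x, Real.sqrt_nonneg β, Real.sqrt_nonneg d, Real.sqrt_nonneg v]

theorem core (m : ℕ) : ∀ (c : ℕ → ℝ),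
    (∀ i j, i ≤ j → j < 2*m → c j ≤ c i) →
    (∀ i < 2*m, 0 ≤ c i) →
    ∀ (P : Multiset (ℝ × ℝ)) (p q : ℝ), q ≤ p →
    (p ::ₘ q ::ₘ pU P) = (Multiset.range (2*m)).map c →
    p - q - 2 * pSum P ≤
      c 0 - c m - 2 * ∑ ℓ ∈ Finset.Ico 1 m, Real.sqrt (c ℓ * c (2*m - ℓ)) := by
  induction m with
  | zero =>
    intro c _ _ P p q _ h4
    exfalso
    have := congrArg Multiset.card h4
    simp at this
  | succ m ih =>
    intro c hmono hnn P p q hqp h4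
    have hcard : Multiset.card P = m := by
      have := congrArg Multiset.card h4
      simp [card_pU] at this
      omega
    rcases Nat.eq_zero_or_pos m with rfl | hm
    · -- base case : current size is 1
      have hP0 : P = 0 := Multiset.card_eq_zero.1 hcard
      subst hP0
      have hpT : p ∈ (Multiset.range (2*1)).map c := h4 ▸ Multiset.mem_cons_self _ _
      have hp0 : p ≤ c 0 := by
        obtain ⟨i, hi, rfl⟩ := Multiset.mem_map.1 hpT
        exact hmono 0 i (Nat.zero_le _) (Multiset.mem_range.1 hi)
      have hsum := congrArg Multiset.sum h4
      have hr2 : Multiset.range (2*1) = 1 ::ₘ 0 ::ₘ 0 := by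
        simp [show 2*1 = 2 from rfl, Multiset.range_succ]
      rw [hr2] at hsum
      simp [pU] at hsum
      simp [pSum]
      linarith
    · -- inductive step
      set T : Multiset ℝ := (Multiset.range (2*(m+1))).map c with hTdef
      set d : ℝ := c (2*m+1) with hddef
      set β : ℝ := c 1 with hβdef
      set M₀ : Multiset ℝ := (Multiset.range (2*m-1)).map (fun i => c (i+2)) with hM₀def
      have hT : T = d ::ₘ c 0 ::ₘ β ::ₘ M₀ := by
        rw [hTdef]
        rw [show 2*(m+1) = (2*m+1)+1 by ring, Multiset.range_succ, Multiset.map_cons]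
        rw [mrange_succ', Multiset.map_cons, Multiset.map_map]
        rw [show 2*m = (2*m-1)+1 by omega, mrange_succ', Multiset.map_cons, Multiset.map_map]
        have hmc : Multiset.map ((c ∘ (· + 1)) ∘ (· + 1)) (Multiset.range (2*m-1)) = M₀ :=
          Multiset.map_congr rfl (fun x _ => by
            simp only [Function.comp_apply])
        rw [hmc]
        rw [show 2*m-1+1+1 = 2*m+1 by omega]
        rfl
      have hTmem : ∀ x ∈ T, 0 ≤ x ∧ d ≤ x ∧ x ≤ c 0 := by
        intro x hx
        obtain ⟨i, hi, rfl⟩ := Multiset.mem_map.1 hx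
        have hi' : i < 2*(m+1) := Multiset.mem_range.1 hi
        exact ⟨hnn i hi', hmono i (2*m+1) (by omega) (by omega),
          hmono 0 i (Nat.zero_le _) hi'⟩
      have hd0 : 0 ≤ d := hnn _ (by omega)
      -- Step 0
      have step0 : ∃ (q₁ : ℝ) (P₁ : Multiset (ℝ×ℝ)), q₁ ≤ c 0 ∧
          c 0 ::ₘ q₁ ::ₘ pU P₁ = T ∧ Multiset.card P₁ = m ∧
          p - q - 2 * pSum P ≤ c 0 - q₁ - 2 * pSum P₁ := by
        have hpT : p ∈ T := h4 ▸ Multiset.mem_cons_self _ _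
        by_cases hp : c 0 ≤ p
        · have hpc : p = c 0 := le_antisymm (hTmem p hpT).2.2 hp
          exact ⟨q, P, hpc ▸ hqp, hpc ▸ h4, hcard, by rw [hpc]⟩
        · push_neg at hp
          have hc0T : c 0 ∈ T := Multiset.mem_map.2 ⟨0, Multiset.mem_range.2 (by omega), rfl⟩
          rw [← h4] at hc0T
          rcases Multiset.mem_cons.1 hc0T with h | hc0T
          · exact absurd h.symm (ne_of_lt hp)
          rcases Multiset.mem_cons.1 hc0T with h | hc0U
          · exfalso; rw [← h] at hqp; linarith
          obtain ⟨z, hz, hz1⟩ := mem_pU hc0U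
          have hzP : z ::ₘ P.erase z = P := Multiset.cons_erase hz
          have hPU : pU P = z.1 ::ₘ z.2 ::ₘ pU (P.erase z) := by
            conv_lhs => rw [← hzP]
            rw [pU_cons]
          have hPS : pSum P = Real.sqrt (z.1 * z.2) + pSum (P.erase z) := by
            conv_lhs => rw [← hzP]
            rw [pSum_cons]
          have h1T : z.1 ∈ T := by
            rw [← h4]
            exact Multiset.mem_cons_of_mem (Multiset.mem_cons_of_mem (fst_mem_pU hz))
          have h2T : z.2 ∈ T := by
            rw [← h4]
            exact Multiset.mem_cons_of_mem (Multiset.mem_cons_of_mem (snd_mem_pU hz))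
          have hcard' : Multiset.card (P.erase z) = m - 1 := by
            rw [Multiset.card_erase_of_mem hz, hcard]; rfl
          rcases hz1 with h1 | h2
          · -- z.1 = c 0
            refine ⟨q, (p, z.2) ::ₘ P.erase z, le_trans hqp (le_of_lt hp), ?_, ?_, ?_⟩
            · rw [← h4, hPU, pU_cons, h1]
              simp only [← Multiset.singleton_add]
              try abel
            · simp [hcard']; omega
            · rw [hPS, pSum_cons]
              have hs := sqS1 (p := p) (w := c 0) (v := z.2) (hTmem _ h2T).1 (le_of_lt hp)
              have h1' : z.1 * z.2 = c 0 * z.2 := by rw [h1]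
              rw [h1']
              dsimp only
              linarith
          · -- z.2 = c 0
            refine ⟨q, (p, z.1) ::ₘ P.erase z, le_trans hqp (le_of_lt hp), ?_, ?_, ?_⟩
            · rw [← h4, hPU, pU_cons, h2]
              simp only [← Multiset.singleton_add]
              try abel
            · simp [hcard']; omega
            · rw [hPS, pSum_cons]
              have hs := sqS1 (p := p) (w := c 0) (v := z.1) (hTmem _ h1T).1 (le_of_lt hp)
              have h2' : z.1 * z.2 = c 0 * z.1 := by rw [h2, mul_comm]
              rw [h2']
              dsimp only
              linarith
      obtain ⟨q₁, P₁, hq₁, h4₁, hcard₁, hstep0⟩ := step0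
      have hmemT₁ : ∀ x ∈ pU P₁, 0 ≤ x ∧ d ≤ x ∧ x ≤ c 0 := fun x hx =>
        hTmem x (by rw [← h4₁]; exact Multiset.mem_cons_of_mem (Multiset.mem_cons_of_mem hx))
      have hq₁T : q₁ ∈ T := by
        rw [← h4₁]; exact Multiset.mem_cons_of_mem (Multiset.mem_cons_self _ _)
      -- Step 1
      have step1 : ∃ (q₂ x : ℝ) (P₂ : Multiset (ℝ×ℝ)),
          c 0 ::ₘ q₂ ::ₘ x ::ₘ d ::ₘ pU P₂ = T ∧
          p - q - 2 * pSum P ≤ c 0 - q₂ - 2 * (Real.sqrt (x*d) + pSum P₂) := by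
        by_cases hq1d : q₁ ≤ d
        · have hq1d' : q₁ = d := le_antisymm hq1d (hTmem q₁ hq₁T).2.1
          have hP₁ne : P₁ ≠ 0 := by
            intro h0; rw [h0] at hcard₁; simp at hcard₁; omega
          obtain ⟨z, hz⟩ := Multiset.exists_mem_of_ne_zero hP₁ne
          have hzP : z ::ₘ P₁.erase z = P₁ := Multiset.cons_erase hz
          have hPU : pU P₁ = z.1 ::ₘ z.2 ::ₘ pU (P₁.erase z) := by
            conv_lhs => rw [← hzP]
            rw [pU_cons]
          have hPS : pSum P₁ = Real.sqrt (z.1 * z.2) + pSum (P₁.erase z) := by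
            conv_lhs => rw [← hzP]
            rw [pSum_cons]
          have h1m := hmemT₁ z.1 (fst_mem_pU hz)
          have h2m := hmemT₁ z.2 (snd_mem_pU hz)
          rcases le_total z.1 z.2 with hzz | hzz
          · -- new q₂ = z.1, new pair (z.2, d)
            refine ⟨z.1, z.2, P₁.erase z, ?_, ?_⟩
            · rw [← h4₁, hPU, hq1d']
              simp only [← Multiset.singleton_add]
              try abel
            · rw [hPS] at hstep0
              have hs := sqS2 (d := d) (y := z.1) (x := z.2) hd0 h1m.2.1 hzz
              have hc : z.1 * z.2 = z.2 * z.1 := mul_comm _ _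
              rw [hc] at hstep0
              rw [hq1d'] at hstep0
              linarith
          · -- new q₂ = z.2, new pair (z.1, d)
            refine ⟨z.2, z.1, P₁.erase z, ?_, ?_⟩
            · rw [← h4₁, hPU, hq1d']
              simp only [← Multiset.singleton_add]
              try abel
            · rw [hPS] at hstep0
              have hs := sqS2 (d := d) (y := z.2) (x := z.1) hd0 h2m.2.1 hzz
              rw [hq1d'] at hstep0
              linarith
        · push_neg at hq1d
          have hdT : d ∈ T := by rw [hT]; exact Multiset.mem_cons_self _ _
          rw [← h4₁] at hdT
          rcases Multiset.mem_cons.1 hdT with h | hdT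
          · exfalso
            have : c 0 ≤ d := le_of_eq h.symm
            have : q₁ ≤ c 0 := hq₁
            linarith
          rcases Multiset.mem_cons.1 hdT with h | hdU
          · exact absurd h.symm (ne_of_gt hq1d)
          obtain ⟨z, hz, hz1⟩ := mem_pU hdU
          have hzP : z ::ₘ P₁.erase z = P₁ := Multiset.cons_erase hz
          have hPU : pU P₁ = z.1 ::ₘ z.2 ::ₘ pU (P₁.erase z) := by
            conv_lhs => rw [← hzP]
            rw [pU_cons]
          have hPS : pSum P₁ = Real.sqrt (z.1 * z.2) + pSum (P₁.erase z) := by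
            conv_lhs => rw [← hzP]
            rw [pSum_cons]
          rcases hz1 with h1 | h2
          · -- z.1 = d : pair (z.2, d)
            refine ⟨q₁, z.2, P₁.erase z, ?_, ?_⟩
            · rw [← h4₁, hPU, h1]
              simp only [← Multiset.singleton_add]
              try abel
            · rw [hPS] at hstep0
              have hc : z.1 * z.2 = z.2 * d := by rw [h1, mul_comm]
              rw [hc] at hstep0
              linarith
          · -- z.2 = d : pair (z.1, d)
            refine ⟨q₁, z.1, P₁.erase z, ?_, ?_⟩
            · rw [← h4₁, hPU, h2]
              try simp only [← Multiset.singleton_add]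
              try abel
            · rw [hPS] at hstep0
              have hc : z.1 * z.2 = z.1 * d := by rw [h2]
              rw [hc] at hstep0
              linarith
      obtain ⟨q₂, x, P₂, h4₂, hstep1⟩ := step1
      have h6 : d ::ₘ c 0 ::ₘ (q₂ ::ₘ x ::ₘ pU P₂) = d ::ₘ c 0 ::ₘ (β ::ₘ M₀) := by
        rw [← hT, ← h4₂]
        simp only [← Multiset.singleton_add]
        abel
      have h5 : q₂ ::ₘ x ::ₘ pU P₂ = β ::ₘ M₀ := by
        rwa [Multiset.cons_inj_right, Multiset.cons_inj_right] at h6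
      have hββ : ∀ w ∈ β ::ₘ M₀, 0 ≤ w ∧ d ≤ w ∧ w ≤ β := by
        intro w hw
        rcases Multiset.mem_cons.1 hw with rfl | hw
        · exact ⟨hnn 1 (by omega), hmono 1 (2*m+1) (by omega) (by omega), le_refl _⟩
        · obtain ⟨i, hi, rfl⟩ := Multiset.mem_map.1 hw
          have hi' : i < 2*m-1 := Multiset.mem_range.1 hi
          exact ⟨hnn _ (by omega), hmono (i+2) (2*m+1) (by omega) (by omega),
            hmono 1 (i+2) (by omega) (by omega)⟩
      have hβc0 : β ≤ c 0 := hmono 0 1 (by omega) (by omega)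
      have hxm : x ∈ β ::ₘ M₀ := by
        rw [← h5]; exact Multiset.mem_cons_of_mem (Multiset.mem_cons_self _ _)
      have hq₂m : q₂ ∈ β ::ₘ M₀ := h5 ▸ Multiset.mem_cons_self _ _
      -- Step 2
      have step2 : ∃ (q₃ : ℝ) (P₃ : Multiset (ℝ×ℝ)), q₃ ≤ c 0 ∧
          q₃ ::ₘ pU P₃ = M₀ ∧
          p - q - 2 * pSum P ≤ c 0 - q₃ - 2 * (Real.sqrt (β*d) + pSum P₃) := by
        by_cases hxβ : β ≤ x
        · have hxe : x = β := le_antisymm (hββ x hxm).2.2 hxβ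
          refine ⟨q₂, P₂, (hββ q₂ hq₂m).2.2.trans hβc0, ?_, ?_⟩
          · have h7 := h5
            rw [hxe, Multiset.cons_swap] at h7
            rwa [Multiset.cons_inj_right] at h7
          · rw [← hxe]; exact hstep1
        · push_neg at hxβ
          have hβmem : β ∈ q₂ ::ₘ x ::ₘ pU P₂ := by
            rw [h5]; exact Multiset.mem_cons_self _ _
          rcases Multiset.mem_cons.1 hβmem with h | hβm
          · -- β = q₂
            refine ⟨x, P₂, (hββ x hxm).2.2.trans hβc0, ?_, ?_⟩
            · have h7 := h5
              rw [← h] at h7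
              rwa [Multiset.cons_inj_right] at h7
            · have hs := sqS3 (d := d) (x := x) (q := q₂) hd0 (hββ x hxm).2.1
                (h ▸ le_of_lt hxβ)
              have he : Real.sqrt (β*d) = Real.sqrt (q₂*d) := by rw [h]
              rw [he]
              linarith
          rcases Multiset.mem_cons.1 hβm with h | hβU
          · exfalso; rw [h] at hxβ; exact lt_irrefl _ hxβ
          obtain ⟨z, hz, hz1⟩ := mem_pU hβU
          have hzP : z ::ₘ P₂.erase z = P₂ := Multiset.cons_erase hz
          have hPU : pU P₂ = z.1 ::ₘ z.2 ::ₘ pU (P₂.erase z) := by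
            conv_lhs => rw [← hzP]
            rw [pU_cons]
          have hPS : pSum P₂ = Real.sqrt (z.1 * z.2) + pSum (P₂.erase z) := by
            conv_lhs => rw [← hzP]
            rw [pSum_cons]
          have h1mem : z.1 ∈ β ::ₘ M₀ := by
            rw [← h5]
            exact Multiset.mem_cons_of_mem (Multiset.mem_cons_of_mem (fst_mem_pU hz))
          have h2mem : z.2 ∈ β ::ₘ M₀ := by
            rw [← h5]
            exact Multiset.mem_cons_of_mem (Multiset.mem_cons_of_mem (snd_mem_pU hz))
          rcases hz1 with h1 | h2
          · -- z.1 = β : new pair (x, z.2)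
            refine ⟨q₂, (x, z.2) ::ₘ P₂.erase z, (hββ q₂ hq₂m).2.2.trans hβc0, ?_, ?_⟩
            · have h7 : β ::ₘ (q₂ ::ₘ x ::ₘ z.2 ::ₘ pU (P₂.erase z)) = β ::ₘ M₀ := by
                rw [← h5, hPU, h1]
                simp only [← Multiset.singleton_add]
                abel
              rw [pU_cons]
              dsimp only
              rwa [Multiset.cons_inj_right] at h7
            · have hPS' : pSum P₂ = Real.sqrt (β * z.2) + pSum (P₂.erase z) := by
                rw [hPS, h1]
              rw [hPS'] at hstep1
              have hs := sqS4 (x := x) (β := β) (d := d) (v := z.2) hd0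
                (hββ x hxm).1 (le_of_lt hxβ) (hββ z.2 h2mem).2.1
              rw [pSum_cons]
              dsimp only
              linarith
          · -- z.2 = β : new pair (x, z.1)
            refine ⟨q₂, (x, z.1) ::ₘ P₂.erase z, (hββ q₂ hq₂m).2.2.trans hβc0, ?_, ?_⟩
            · have h7 : β ::ₘ (q₂ ::ₘ x ::ₘ z.1 ::ₘ pU (P₂.erase z)) = β ::ₘ M₀ := by
                rw [← h5, hPU, h2]
                simp only [← Multiset.singleton_add]
                abel
              rw [pU_cons]
              dsimp only
              rwa [Multiset.cons_inj_right] at h7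
            · have hPS' : pSum P₂ = Real.sqrt (β * z.1) + pSum (P₂.erase z) := by
                rw [hPS, h2, mul_comm]
              rw [hPS'] at hstep1
              have hs := sqS4 (x := x) (β := β) (d := d) (v := z.1) hd0
                (hββ x hxm).1 (le_of_lt hxβ) (hββ z.1 h1mem).2.1
              rw [pSum_cons]
              dsimp only
              linarith
      obtain ⟨q₃, P₃, hq₃, hstrip, hval⟩ := step2
      -- apply the induction hypothesis
      obtain ⟨c', hc'0, hc'succ⟩ : ∃ c' : ℕ → ℝ, c' 0 = c 0 ∧ ∀ i, c' (i+1) = c (i+2) :=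
        ⟨fun i => if i = 0 then c 0 else c (i+1), if_pos rfl,
          fun i => if_neg (Nat.succ_ne_zero i)⟩
      have hmono' : ∀ i j, i ≤ j → j < 2*m → c' j ≤ c' i := by
        intro i j hij hj
        cases i with
        | zero =>
          cases j with
          | zero => exact le_refl _
          | succ j' =>
            rw [hc'succ, hc'0]
            exact hmono 0 (j'+2) (Nat.zero_le _) (by omega)
        | succ i' =>
          obtain ⟨j', rfl⟩ : ∃ j', j = j'+1 := ⟨j-1, by omega⟩
          rw [hc'succ, hc'succ]
          exact hmono (i'+2) (j'+2) (by omega) (by omega)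
      have hnn' : ∀ i < 2*m, 0 ≤ c' i := by
        intro i hi
        cases i with
        | zero => rw [hc'0]; exact hnn 0 (by omega)
        | succ i' => rw [hc'succ]; exact hnn (i'+2) (by omega)
      have h4' : c 0 ::ₘ q₃ ::ₘ pU P₃ = (Multiset.range (2*m)).map c' := by
        rw [show 2*m = (2*m-1)+1 by omega, mrange_succ', Multiset.map_cons, Multiset.map_map]
        have hmc : Multiset.map (c' ∘ (· + 1)) (Multiset.range (2*m-1)) = M₀ :=
          Multiset.map_congr rfl (fun y _ => by
            simp only [Function.comp_apply]
            rw [hc'succ])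
        rw [hmc, hc'0, ← hstrip]
      have hIH := ih c' hmono' hnn' P₃ (c 0) q₃ hq₃ h4'
      have ecm : c' m = c (m+1) := by
        obtain ⟨m', rfl⟩ : ∃ m', m = m'+1 := ⟨m-1, by omega⟩
        rw [hc'succ]
      have esum : ∑ ℓ ∈ Finset.Ico 1 m, Real.sqrt (c' ℓ * c' (2*m - ℓ)) =
          ∑ ℓ ∈ Finset.Ico 2 (m+1), Real.sqrt (c ℓ * c (2*(m+1) - ℓ)) := by
        rw [Finset.sum_Ico_eq_sum_range, Finset.sum_Ico_eq_sum_range]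
        rw [show m - 1 = m + 1 - 2 by omega]
        apply Finset.sum_congr rfl
        intro i hi
        have hi' : i < m + 1 - 2 := Finset.mem_range.1 hi
        have e1 : c' (1+i) = c (2+i) := by
          rw [show 1+i = i+1 by omega, hc'succ]
          exact congrArg c (by omega)
        have e2 : c' (2*m - (1+i)) = c (2*(m+1) - (2+i)) := by
          obtain ⟨t, ht⟩ : ∃ t, 2*m - (1+i) = t+1 := ⟨2*m - i - 2, by omega⟩
          rw [ht, hc'succ]
          exact congrArg c (by omega)
        rw [e1, e2]
      have hbot : ∑ ℓ ∈ Finset.Ico 1 (m+1), Real.sqrt (c ℓ * c (2*(m+1) - ℓ)) =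
          Real.sqrt (β * d) +
            ∑ ℓ ∈ Finset.Ico 2 (m+1), Real.sqrt (c ℓ * c (2*(m+1) - ℓ)) := by
        rw [Finset.sum_eq_sum_Ico_succ_bot (by omega : 1 < m+1)]
        have e3 : 2*(m+1) - 1 = 2*m+1 := by omega
        rw [e3]
      rw [hc'0, ecm, esum] at hIH
      rw [hbot]
      linarith

/-- If the X-matrix parameters `a_k, b_k, r_k ≥ 0` with `r_k² ≤ a_k b_k` give rise to the
spectrum `λ_1 ≥ … ≥ λ_{2n} ≥ 0` (0-based: `lam 0 ≥ … ≥ lam (2n-1)`), i.e.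
`∏_{k=1}^n ((x - a_k)(x - b_k) - r_k²) = ∏_{i=1}^{2n} (x - λ_i)`, then for every `k`,
`2 (r_k - ∑_{j ≠ k} √(a_j b_j)) ≤ λ_1 - λ_{n+1} - 2 ∑_{ℓ=2}^n √(λ_ℓ λ_{2n+2-ℓ})`;
consequently the GM-concurrence `2 max{0, max_k (r_k - ∑_{j≠k} √(a_j b_j))}` is at most
`max{0, λ_1 - λ_{n+1} - 2 ∑_{ℓ=2}^n √(λ_ℓ λ_{2n+2-ℓ})}`. -/
theorem xstate_gm_concurrence_le (n : ℕ) (hn : 2 ≤ n) (a b r : ℕ → ℝ)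
    (ha : ∀ k < n, 0 ≤ a k) (hb : ∀ k < n, 0 ≤ b k) (hr : ∀ k < n, 0 ≤ r k)
    (hrab : ∀ k < n, r k ^ 2 ≤ a k * b k)
    (lam : ℕ → ℝ)
    (hsort : ∀ i j, i ≤ j → j < 2 * n → lam j ≤ lam i)
    (hpos : ∀ i < 2 * n, 0 ≤ lam i)
    (hpoly : ∏ k ∈ Finset.range n,
        ((X - C (a k)) * (X - C (b k)) - C (r k) ^ 2) =
      ∏ i ∈ Finset.range (2 * n), (X - C (lam i))) :
    (∀ k < n,
      2 * (r k - ∑ j ∈ (Finset.range n).erase k, Real.sqrt (a j * b j)) ≤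
        lam 0 - lam n -
          2 * ∑ ℓ ∈ Finset.Ico 1 n, Real.sqrt (lam ℓ * lam (2 * n - ℓ))) ∧
    2 * max 0 ((Finset.range n).sup' (Finset.nonempty_range_iff.mpr (by omega))
        (fun k => r k - ∑ j ∈ (Finset.range n).erase k, Real.sqrt (a j * b j))) ≤
      max 0 (lam 0 - lam n -
        2 * ∑ ℓ ∈ Finset.Ico 1 n, Real.sqrt (lam ℓ * lam (2 * n - ℓ))) := by
  set D : ℕ → ℝ := fun k => Real.sqrt ((a k - b k)^2 + 4 * r k^2) with hDdef
  set Pf : ℕ → ℝ := fun k => (a k + b k + D k)/2 with hPfdef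
  set Qf : ℕ → ℝ := fun k => (a k + b k - D k)/2 with hQfdef
  have hDsq : ∀ k, D k ^ 2 = (a k - b k)^2 + 4 * r k^2 := fun k =>
    Real.sq_sqrt (by positivity)
  have hDnn : ∀ k, 0 ≤ D k := fun k => Real.sqrt_nonneg _
  have hQP : ∀ k, Qf k ≤ Pf k := by
    intro k
    simp only [hPfdef, hQfdef]
    have := hDnn k
    linarith
  have hsumPQ : ∀ k, Pf k + Qf k = a k + b k := by
    intro k; simp only [hPfdef, hQfdef]; ring
  have hprodPQ : ∀ k < n, Pf k * Qf k = a k * b k - r k ^ 2 := by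
    intro k hk
    have e : Pf k * Qf k = ((a k + b k)^2 - D k^2)/4 := by
      simp only [hPfdef, hQfdef]; ring
    rw [e, hDsq]; ring
  have h2r : ∀ k < n, 2 * r k ≤ D k := by
    intro k hk
    have h1 : (2 * r k)^2 ≤ (a k - b k)^2 + 4 * r k^2 := by nlinarith
    have h2 := Real.sqrt_le_sqrt h1
    rwa [Real.sqrt_sq (by linarith [hr k hk])] at h2
  have hPQD : ∀ k, Pf k - Qf k = D k := by
    intro k; simp only [hPfdef, hQfdef]; ring
  -- factorization of each quadratic
  have hfact : ∀ k ∈ Finset.range n,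
      (X - C (a k)) * (X - C (b k)) - C (r k) ^ 2
        = (X - C (Pf k)) * (X - C (Qf k)) := by
    intro k hk
    have hk' := Finset.mem_range.1 hk
    have e1 : C (Pf k) + C (Qf k) = C (a k) + C (b k) := by
      rw [← C_add, ← C_add, hsumPQ]
    have e2 : C (Pf k) * C (Qf k) = C (a k) * C (b k) - C (r k)^2 := by
      rw [← C_mul, ← C_mul, ← C_pow, hprodPQ k hk', map_sub]
    linear_combination (X : ℝ[X]) * e1 - e2
  rw [Finset.prod_congr rfl hfact] at hpoly
  -- multiset of roots
  have hprod1 : (((Finset.range n).val.map Pf + (Finset.range n).val.map Qf).map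
      (fun x => X - C x)).prod
      = (((Finset.range (2*n)).val.map lam).map (fun x => X - C x)).prod := by
    rw [Multiset.map_add, Multiset.prod_add]
    rw [Multiset.map_map, Multiset.map_map, Multiset.map_map]
    rw [← Finset.prod_eq_multiset_prod, ← Finset.prod_eq_multiset_prod,
      ← Finset.prod_eq_multiset_prod]
    rw [← Finset.prod_mul_distrib]
    exact hpoly
  have hM : (Finset.range n).val.map Pf + (Finset.range n).val.map Qf
      = (Finset.range (2*n)).val.map lam := by
    have hr' := congrArg Polynomial.roots hprod1
    rwa [Polynomial.roots_multiset_prod_X_sub_C,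
      Polynomial.roots_multiset_prod_X_sub_C] at hr'
  have part1 : ∀ k < n,
      2 * (r k - ∑ j ∈ (Finset.range n).erase k, Real.sqrt (a j * b j)) ≤
        lam 0 - lam n -
          2 * ∑ ℓ ∈ Finset.Ico 1 n, Real.sqrt (lam ℓ * lam (2 * n - ℓ)) := by
    intro k hk
    set Pk : Multiset (ℝ × ℝ) :=
      ((Finset.range n).erase k).val.map (fun j => (Pf j, Qf j)) with hPkdef
    have hval : (Finset.range n).val = k ::ₘ ((Finset.range n).erase k).val := by
      rw [Finset.erase_val]
      exact (Multiset.cons_erase (by simp [hk])).symm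
    have h4 : Pf k ::ₘ Qf k ::ₘ pU Pk = (Multiset.range (2*n)).map lam := by
      have hpu : pU Pk = ((Finset.range n).erase k).val.map Pf
          + ((Finset.range n).erase k).val.map Qf := by
        simp only [pU, hPkdef, Multiset.map_map]
        rfl
      rw [hpu, ← Finset.range_val, ← hM, hval]
      simp only [Multiset.map_cons, Multiset.cons_add, Multiset.add_cons]
      simp only [← Multiset.singleton_add]
      abel
    have hcore := core n lam hsort hpos Pk (Pf k) (Qf k) (hQP k) h4
    have hps : pSum Pk = ∑ j ∈ (Finset.range n).erase k, Real.sqrt (Pf j * Qf j) := by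
      simp only [pSum, hPkdef, Multiset.map_map, Finset.sum_eq_multiset_sum]
      rfl
    rw [hps] at hcore
    have hsq : ∀ j ∈ (Finset.range n).erase k,
        Real.sqrt (Pf j * Qf j) ≤ Real.sqrt (a j * b j) := by
      intro j hj
      have hj' : j < n := Finset.mem_range.1 (Finset.mem_of_mem_erase hj)
      apply Real.sqrt_le_sqrt
      rw [hprodPQ j hj']
      nlinarith [sq_nonneg (r j)]
    have hsum := Finset.sum_le_sum hsq
    have h2rk := h2r k hk
    have hD := hPQD k
    linarith
  refine ⟨part1, ?_⟩
  rcases le_or_gt ((Finset.range n).sup' (Finset.nonempty_range_iff.mpr (by omega))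
      (fun k => r k - ∑ j ∈ (Finset.range n).erase k, Real.sqrt (a j * b j))) 0 with hs | hs
  · rw [max_eq_left hs, mul_zero]
    exact le_max_left _ _
  · rw [max_eq_right (le_of_lt hs)]
    obtain ⟨k, hk, hsup⟩ := Finset.exists_mem_eq_sup'
      (Finset.nonempty_range_iff.mpr (by omega : n ≠ 0))
      (fun k => r k - ∑ j ∈ (Finset.range n).erase k, Real.sqrt (a j * b j))
    rw [hsup]
    have := part1 k (Finset.mem_range.1 hk)
    exact le_trans this (le_max_right _ _)
end

section
/- Let n ≥ 2 be an integer and let γ ∈ (0, 1/2]. Define f(γ) = 1/(n+1) if γ ≤ 1/(n+1) and f(γ) = γ if γ ≥ 1/(n+1), g(γ) = (1 − 2f(γ))/(n−1), and the spectrum λ ∈ ℝ^{2n} by λ_1 = f(γ)+γ, λ_j = g(γ) for 2 ≤ j ≤ n, λ_{n+1} = f(γ)−γ, and λ_{n+j} = 0 for 2 ≤ j ≤ n. Then: (i) λ_1 ≥ λ_2 ≥ … ≥ λ_{2n} ≥ 0; (ii) ∑_{k=1}^{2n} λ_k = 1; (iii) ∑_{k=1}^{2n} λ_k² = 2γ²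 + 1/(n+1) when γ ≤ 1/(n+1), and ∑_{k=1}^{2n} λ_k² = 4γ² + (1−2γ)²/(n−1) when γ ≥ 1/(n+1); and (iv) λ_1 − λ_{n+1} − 2·∑_{j=2}^n √(λ_j·λ_{2n+2−j}) = 2γ. -/
/-- Properties of the X-MEMS spectrum parametrized by `γ ∈ (0, 1/2]` (0-based `lam`, so the
`1`-based `λ_k` is `lam (k-1)`): with `f(γ) = 1/(n+1)` for `γ ≤ 1/(n+1)` and `f(γ) = γ`
otherwise, `g(γ) = (1 - 2 f(γ))/(n-1)`, and
`λ_1 = f+γ, λ_j = g (2 ≤ j ≤ n), λ_{n+1} = f-γ, λ_{n+j} = 0 (2 ≤ j ≤ n)`, the spectrum is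
sorted and nonnegative, sums to `1`, has the stated piecewise sum of squares (purity), and its
objective `λ_1 - λ_{n+1} - 2 ∑_{j=2}^n √(λ_j λ_{2n+2-j})` equals `2γ`. -/
theorem xmems_spectrum_props (n : ℕ) (hn : 2 ≤ n) (γ : ℝ)
    (hγ1 : 0 < γ) (hγ2 : γ ≤ 1 / 2)
    (f g : ℝ)
    (hf : f = if γ ≤ 1 / ((n : ℝ) + 1) then 1 / ((n : ℝ) + 1) else γ)
    (hg : g = (1 - 2 * f) / ((n : ℝ) - 1))
    (lam : ℕ → ℝ)
    (hlam : ∀ i, lam i =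
      if i = 0 then f + γ else if i < n then g else if i = n then f - γ else 0) :
    (∀ i j, i ≤ j → j < 2 * n → lam j ≤ lam i) ∧
    (∀ i < 2 * n, 0 ≤ lam i) ∧
    (∑ k ∈ Finset.range (2 * n), lam k = 1) ∧
    (γ ≤ 1 / ((n : ℝ) + 1) →
      ∑ k ∈ Finset.range (2 * n), (lam k) ^ 2 = 2 * γ ^ 2 + 1 / ((n : ℝ) + 1)) ∧
    (1 / ((n : ℝ) + 1) ≤ γ →
      ∑ k ∈ Finset.range (2 * n), (lam k) ^ 2 =
        4 * γ ^ 2 + (1 - 2 * γ) ^ 2 / ((n : ℝ) - 1)) ∧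
    (lam 0 - lam n -
      2 * ∑ j ∈ Finset.Ico 1 n, Real.sqrt (lam j * lam (2 * n - j)) = 2 * γ) := by
  have hn2 : (2:ℝ) ≤ (n:ℝ) := by exact_mod_cast hn
  have hd1 : (0:ℝ) < (n:ℝ) - 1 := by linarith
  have hd2 : (0:ℝ) < (n:ℝ) + 1 := by linarith
  -- basic facts about f
  have hfγ : γ ≤ f := by
    rw [hf]; split_ifs with h
    · exact h
    · exact le_rfl
  have hf1 : 1 / ((n:ℝ) + 1) ≤ f := by
    rw [hf]; split_ifs with h
    · exact le_rfl
    · push_neg at h; linarith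
  have hf2 : f ≤ 1 / 2 := by
    rw [hf]; split_ifs with h
    · rw [div_le_div_iff₀ hd2 two_pos]; linarith
    · exact hγ2
  have hg0 : (0:ℝ) ≤ g := by
    rw [hg]; exact div_nonneg (by linarith) hd1.le
  have hf1' : (1:ℝ) ≤ f * ((n:ℝ) + 1) := by
    have := (div_le_iff₀ hd2).mp hf1; linarith
  have hg_le : g ≤ 1 / ((n:ℝ) + 1) := by
    rw [hg, div_le_div_iff₀ hd1 hd2]; nlinarith
  have hfγg : f - γ ≤ g := by
    by_cases h : γ ≤ 1 / ((n:ℝ) + 1)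
    · have hfe : f = 1 / ((n:ℝ) + 1) := by rw [hf, if_pos h]
      have hge : g = 1 / ((n:ℝ) + 1) := by
        rw [hg, hfe]; field_simp; ring
      rw [hfe, hge]; linarith
    · have hfe : f = γ := by rw [hf, if_neg h]
      rw [hfe]; simpa using hg0
  -- values of lam
  have l0 : lam 0 = f + γ := by rw [hlam]; simp
  have lmid : ∀ j, 1 ≤ j → j < n → lam j = g := by
    intro j h1 h2
    rw [hlam, if_neg (by omega), if_pos h2]
  have ln : lam n = f - γ := by
    rw [hlam, if_neg (by omega), if_neg (by omega), if_pos rfl]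
  have ltop : ∀ j, n < j → lam j = 0 := by
    intro j hj
    rw [hlam, if_neg (by omega), if_neg (by omega), if_neg (by omega)]
  have hcase : ∀ k : ℕ, k = 0 ∨ (1 ≤ k ∧ k < n) ∨ k = n ∨ n < k := by omega
  -- sum decomposition helper
  have hsplit : ∀ F : ℕ → ℝ, ∑ k ∈ Finset.range (2 * n), F k
      = F 0 + (∑ j ∈ Finset.Ico 1 n, F j) + F n + ∑ j ∈ Finset.Ico (n + 1) (2 * n), F j := by
    intro F
    rw [Finset.range_eq_Ico,
      ← Finset.sum_Ico_consecutive _ (by omega : 0 ≤ n) (by omega : n ≤ 2 * n),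
      Finset.sum_eq_sum_Ico_succ_bot (by omega : 0 < n) F,
      Finset.sum_eq_sum_Ico_succ_bot (by omega : n < 2 * n) F]
    ring
  have hmidsum : ∀ c : ℝ, (∑ _j ∈ Finset.Ico 1 n, c) = ((n:ℝ) - 1) * c := by
    intro c
    rw [Finset.sum_const, Nat.card_Ico, nsmul_eq_mul]
    rw [Nat.cast_sub (by omega)]
    norm_num
  have hNg : ((n:ℝ) - 1) * g = 1 - 2 * f := by
    rw [hg]; field_simp
  refine ⟨?_, ?_, ?_, ?_, ?_, ?_⟩
  · -- sorted
    intro i j hij hj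
    rcases hcase j with rfl | ⟨hj1, hj2⟩ | rfl | hjn
    · have : i = 0 := by omega
      subst this; exact le_rfl
    · rw [lmid j hj1 hj2]
      rcases hcase i with rfl | ⟨hi1, hi2⟩ | rfl | hin
      · rw [l0]; linarith
      · rw [lmid i hi1 hi2]
      · omega
      · omega
    · rw [ln]
      rcases hcase i with rfl | ⟨hi1, hi2⟩ | rfl | hin
      · rw [l0]; linarith
      · rw [lmid i hi1 hi2]; exact hfγg
      · rw [ln]
      · omega
    · rw [ltop j hjn]
      rcases hcase i with rfl | ⟨hi1, hi2⟩ | rfl | hin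
      · rw [l0]; linarith
      · rw [lmid i hi1 hi2]; exact hg0
      · rw [ln]; linarith
      · rw [ltop i hin]
  · -- nonneg
    intro i _
    rcases hcase i with rfl | ⟨hi1, hi2⟩ | rfl | hin
    · rw [l0]; linarith
    · rw [lmid i hi1 hi2]; exact hg0
    · rw [ln]; linarith
    · rw [ltop i hin]
  · -- sum = 1
    rw [hsplit lam, l0, ln,
      Finset.sum_congr rfl (fun j hj => lmid j (Finset.mem_Ico.mp hj).1 (Finset.mem_Ico.mp hj).2),
      hmidsum g, hNg,
      Finset.sum_eq_zero (fun j hj => ltop j (Nat.lt_of_succ_le (Finset.mem_Ico.mp hj).1))]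
    ring
  · -- purity, small γ
    intro hsmall
    have hfe : f = 1 / ((n:ℝ) + 1) := by rw [hf, if_pos hsmall]
    have hge : g = 1 / ((n:ℝ) + 1) := by rw [hg, hfe]; field_simp; ring
    rw [hsplit (fun k => (lam k) ^ 2)]
    rw [l0, ln,
      Finset.sum_congr rfl (fun j hj =>
        by rw [lmid j (Finset.mem_Ico.mp hj).1 (Finset.mem_Ico.mp hj).2]),
      hmidsum (g ^ 2),
      Finset.sum_eq_zero (fun j hj =>
        by rw [ltop j (Nat.lt_of_succ_le (Finset.mem_Ico.mp hj).1)]; ring)]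
    rw [hfe, hge]
    field_simp
    ring
  · -- purity, large γ
    intro hbig
    have hfe : f = γ := by
      rw [hf]; split_ifs with h
      · linarith
      · rfl
    have hge : g = (1 - 2 * γ) / ((n:ℝ) - 1) := by rw [hg, hfe]
    rw [hsplit (fun k => (lam k) ^ 2)]
    rw [l0, ln,
      Finset.sum_congr rfl (fun j hj =>
        by rw [lmid j (Finset.mem_Ico.mp hj).1 (Finset.mem_Ico.mp hj).2]),
      hmidsum (g ^ 2),
      Finset.sum_eq_zero (fun j hj =>
        by rw [ltop j (Nat.lt_of_succ_le (Finset.mem_Ico.mp hj).1)]; ring)]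
    rw [hfe, hge]
    field_simp
    ring
  · -- objective
    have hzero : ∑ j ∈ Finset.Ico 1 n, Real.sqrt (lam j * lam (2 * n - j)) = 0 := by
      apply Finset.sum_eq_zero
      intro j hj
      rw [Finset.mem_Ico] at hj
      rw [ltop (2 * n - j) (by omega), mul_zero, Real.sqrt_zero]
    rw [hzero, l0, ln]
    ring
end

section
/- Let n ≥ 2 be an integer and γ ∈ (0, 1/2]. Define 𝔷_1 = 2+2γ+1/(2γ), 𝔷_2 = (1+γ)²/(2γ), 𝔷_3 = 1/(2γ), 𝔷_4 = 0 and P = 2γ² + 1/(n+1) when 0 < γ ≤ 1/(n+1); and 𝔷_1 = (1−n)(1+2γ)²/(2(1−2nγ)), 𝔷_2 = (n−2γ)²/(2(1−n)(1−2nγ)), 𝔷_3 = (1−n)/(2(1−2nγ)), 𝔷_4 = 1 + (1−2γ)/(1−2nγ) and P = 4γ² + (1−2γ)²/(n−1) when 1/(n+1) ≤ γ ≤ 1/2. Then in both cases (1/(n+1))·[ n·𝔷_1 + 2(n−1)·(𝔷_2 − √(𝔷_1·𝔷_2)) ] + 𝔷_3·(P − 1) + 𝔷_4 = 1 + 2γ.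 Equivalently, the dual SDP value −tr(F_0·𝒵) equals −1 − 2γ, matching the primal feasible value of the X-MEMS spectrum of purity P. -/
/-- The dual feasible value matches the primal value of the X-MEMS SDP: for `γ ∈ (0, 1/2]`,
with the dual variables `𝔷_1, 𝔷_2, 𝔷_3, 𝔷_4` and purity `P` defined piecewise as stated, one
has `(1/(n+1))·[n 𝔷_1 + 2(n-1)(𝔷_2 - √(𝔷_1 𝔷_2))] + 𝔷_3 (P - 1) + 𝔷_4 = 1 + 2γ` in both
cases; equivalently, the dual SDP value `-tr(F_0 𝒵)` equals `-1 - 2γ`. -/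
theorem dual_value_eq_primal (n : ℕ) (hn : 2 ≤ n) (γ : ℝ)
    (hγ1 : 0 < γ) (hγ2 : γ ≤ 1 / 2) :
    (∀ z1 z2 z3 z4 P : ℝ, γ ≤ 1 / ((n : ℝ) + 1) →
      z1 = 2 + 2 * γ + 1 / (2 * γ) →
      z2 = (1 + γ) ^ 2 / (2 * γ) →
      z3 = 1 / (2 * γ) →
      z4 = 0 →
      P = 2 * γ ^ 2 + 1 / ((n : ℝ) + 1) →
      (1 / ((n : ℝ) + 1)) *
          ((n : ℝ) * z1 + 2 * ((n : ℝ) - 1) * (z2 - Real.sqrt (z1 * z2))) +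
        z3 * (P - 1) + z4 = 1 + 2 * γ) ∧
    (∀ z1 z2 z3 z4 P : ℝ, 1 / ((n : ℝ) + 1) ≤ γ →
      z1 = (1 - (n : ℝ)) * (1 + 2 * γ) ^ 2 / (2 * (1 - 2 * (n : ℝ) * γ)) →
      z2 = ((n : ℝ) - 2 * γ) ^ 2 / (2 * (1 - (n : ℝ)) * (1 - 2 * (n : ℝ) * γ)) →
      z3 = (1 - (n : ℝ)) / (2 * (1 - 2 * (n : ℝ) * γ)) →
      z4 = 1 + (1 - 2 * γ) / (1 - 2 * (n : ℝ) * γ) →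
      P = 4 * γ ^ 2 + (1 - 2 * γ) ^ 2 / ((n : ℝ) - 1) →
      (1 / ((n : ℝ) + 1)) *
          ((n : ℝ) * z1 + 2 * ((n : ℝ) - 1) * (z2 - Real.sqrt (z1 * z2))) +
        z3 * (P - 1) + z4 = 1 + 2 * γ) := by

  have hn1 : (1:ℝ) ≤ (n:ℝ) := by exact_mod_cast Nat.one_le_of_lt hn
  have hn2 : (2:ℝ) ≤ (n:ℝ) := by exact_mod_cast hn
  have hnpos : (0:ℝ) < (n:ℝ) + 1 := by linarith
  constructor
  · intro z1 z2 z3 z4 P _ h1 h2 h3 h4 h5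
    subst h1 h2 h3 h4 h5
    have hsq : (2 + 2 * γ + 1 / (2 * γ)) * ((1 + γ) ^ 2 / (2 * γ))
        = ((1 + 2 * γ) * (1 + γ) / (2 * γ)) ^ 2 := by
      field_simp; ring
    rw [hsq, Real.sqrt_sq (by positivity)]
    field_simp
    ring
  · intro z1 z2 z3 z4 P hγ3 h1 h2 h3 h4 h5
    subst h1 h2 h3 h4 h5
    have hd : (2:ℝ) * (n:ℝ) * γ - 1 > 0 := by
      have : (1:ℝ) ≤ ((n:ℝ) + 1) * γ := by
        rw [div_le_iff₀ hnpos] at hγ3; linarith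
      nlinarith
    have hd' : (1:ℝ) - 2 * (n:ℝ) * γ ≠ 0 := by linarith
    have hsq : (1 - (n:ℝ)) * (1 + 2 * γ) ^ 2 / (2 * (1 - 2 * (n:ℝ) * γ)) *
        (((n:ℝ) - 2 * γ) ^ 2 / (2 * (1 - (n:ℝ)) * (1 - 2 * (n:ℝ) * γ)))
        = ((1 + 2 * γ) * ((n:ℝ) - 2 * γ) / (2 * (2 * (n:ℝ) * γ - 1))) ^ 2 := by
      have hn1' : (1:ℝ) - (n:ℝ) ≠ 0 := by linarith
      field_simp
      ring
    have hnonneg : (0:ℝ) ≤ (1 + 2 * γ) * ((n:ℝ) - 2 * γ) / (2 * (2 * (n:ℝ) * γ - 1)) := by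
      apply div_nonneg
      · nlinarith
      · linarith
    rw [hsq, Real.sqrt_sq hnonneg]
    have hn1'' : (n:ℝ) - 1 ≠ 0 := by linarith
    have hn1' : (1:ℝ) - (n:ℝ) ≠ 0 := by linarith
    have hd2 : (1:ℝ) - (n:ℝ) * 2 * γ ≠ 0 := by linarith
    have hd3 : (n:ℝ) * 2 * γ - 1 ≠ 0 := by linarith
    field_simp
    ring
end

section
/- Let n ≥ 1 be an integer, P a real, and λ ∈ ℝ^n. Let Q_n := I_n − J_n/(n+1), where J_n is the n×n all-ones matrix, and let j_n be the all-ones n-vector. Then the quadratic inequality (1 − ∑_{k=1}^n λ_k)² + ∑_{k=1}^n λ_k² ≤ P holds if and only if the (n+1)×(n+1) block matrix [[Q_n, λ],[λᵀ, P − 1 + 2·j_nᵀλ]] is positive semidefinite. -/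
open Finset Matrix

private lemma quad_nonneg_aux (n : ℕ) (lam : Fin n → ℝ) (c t : ℝ) (y : Fin n → ℝ)
    (hc : (∑ i, lam i) ^ 2 + ∑ i, lam i ^ 2 ≤ c) :
    0 ≤ (∑ i, y i ^ 2) - (∑ i, y i) ^ 2 / ((n : ℝ) + 1)
      + 2 * t * (∑ i, lam i * y i) + t ^ 2 * c := by
  set s : ℝ := ∑ i, lam i with hs
  set D : ℝ := ∑ i, lam i ^ 2 with hD
  set A : ℝ := ∑ i, y i ^ 2 with hA
  set B : ℝ := ∑ i, y i with hB
  set C : ℝ := ∑ i, lam i * y i with hC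
  set z : Fin n → ℝ := fun i => y i + t * (lam i + s) with hzdef
  have hn1 : (0:ℝ) < (n : ℝ) + 1 := by positivity
  have f3 : ∑ i, z i = B + t * ((n : ℝ) + 1) * s := by
    simp only [hzdef, Finset.sum_add_distrib, ← Finset.mul_sum, Finset.sum_const,
      card_univ, Fintype.card_fin, nsmul_eq_mul]
    rw [hB, hs]; ring
  have f4 : ∑ i, z i ^ 2 = A + 2 * t * (C + s * B) + t ^ 2 * (D + ((n:ℝ) + 2) * s ^ 2) := by
    have : ∀ i : Fin n, z i ^ 2 = y i ^ 2 + 2 * t * (lam i * y i) + 2 * t * s * y i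
        + t ^ 2 * lam i ^ 2 + 2 * t ^ 2 * s * lam i + t ^ 2 * s ^ 2 := by
      intro i; simp only [hzdef]; ring
    rw [Finset.sum_congr rfl fun i _ => this i]
    simp only [Finset.sum_add_distrib, ← Finset.mul_sum, Finset.sum_const, card_univ,
      Fintype.card_fin, nsmul_eq_mul]
    rw [hA, hB, hC, hD, hs]; ring
  have f1 : (∑ i, z i) ^ 2 ≤ (n : ℝ) * ∑ i, z i ^ 2 := by
    have := sq_sum_le_card_mul_sum_sq (s := (univ : Finset (Fin n))) (f := z)
    simpa [card_univ] using this
  have f2 : (0:ℝ) ≤ ∑ i, z i ^ 2 := by positivity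
  have hprod : 0 ≤ t ^ 2 * (c - (D + s ^ 2)) * ((n : ℝ) + 1) :=
    mul_nonneg (mul_nonneg (sq_nonneg t) (by linarith)) (by positivity)
  have key : ((n:ℝ)+1) * A - B ^ 2 + 2 * t * C * ((n:ℝ)+1) + t ^ 2 * c * ((n:ℝ)+1)
      = (((n:ℝ)+1) * (∑ i, z i ^ 2) - (∑ i, z i) ^ 2)
        + t ^ 2 * (c - (D + s ^ 2)) * ((n:ℝ)+1) := by
    rw [f3, f4]; ring
  have hgoal : A - B ^ 2 / ((n : ℝ) + 1) + 2 * t * C + t ^ 2 * c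
      = (((n:ℝ)+1) * A - B ^ 2 + 2 * t * C * ((n:ℝ)+1) + t ^ 2 * c * ((n:ℝ)+1)) / ((n:ℝ)+1) := by
    field_simp
  rw [hgoal]
  apply div_nonneg _ hn1.le
  linarith

private noncomputable def Mmat (n : ℕ) (P : ℝ) (lam : ℕ → ℝ) :
    Matrix (Fin (n+1)) (Fin (n+1)) ℝ :=
  Matrix.of fun p q : Fin (n + 1) =>
    if p.val < n ∧ q.val < n then
      (if p.val = q.val then (1 : ℝ) else 0) - 1 / ((n : ℝ) + 1)
    else if p.val < n ∧ q.val = n then lam p.val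
    else if p.val = n ∧ q.val < n then lam q.val
    else P - 1 + 2 * ∑ k ∈ Finset.range n, lam k

private lemma Mmat_herm (n : ℕ) (P : ℝ) (lam : ℕ → ℝ) : (Mmat n P lam).IsHermitian := by
  unfold Matrix.IsHermitian
  ext p q
  simp only [Mmat, Matrix.conjTranspose_apply, Matrix.of_apply, star_trivial]
  split_ifs <;> first | rfl | omega

private lemma Mmat_form (n : ℕ) (P : ℝ) (lam : ℕ → ℝ) (x : Fin (n+1) → ℝ) :
    dotProduct (star x) (Mmat n P lam *ᵥ x)
      = (∑ i : Fin n, x i.castSucc ^ 2)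
        - (∑ i : Fin n, x i.castSucc) ^ 2 / ((n : ℝ) + 1)
        + 2 * x (Fin.last n) * (∑ i : Fin n, lam i.val * x i.castSucc)
        + x (Fin.last n) ^ 2 * (P - 1 + 2 * ∑ k ∈ Finset.range n, lam k) := by
  set t : ℝ := x (Fin.last n) with ht
  set B : ℝ := ∑ i : Fin n, x i.castSucc with hB
  set c : ℝ := P - 1 + 2 * ∑ k ∈ Finset.range n, lam k with hc
  have inner1 : ∀ i : Fin n, (Mmat n P lam *ᵥ x) i.castSucc
      = x i.castSucc - B / ((n : ℝ) + 1) + lam i.val * t := by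
    intro i
    simp only [Matrix.mulVec, dotProduct]
    rw [Fin.sum_univ_castSucc]
    have h1 : ∀ j : Fin n, Mmat n P lam i.castSucc j.castSucc * x j.castSucc
        = (if i = j then x j.castSucc else 0) - x j.castSucc * (1 / ((n:ℝ)+1)) := by
      intro j
      simp only [Mmat, Matrix.of_apply, Fin.coe_castSucc]
      rw [if_pos ⟨i.isLt, j.isLt⟩]
      by_cases h : i = j
      · have : i.val = j.val := by rw [h]
        simp [h, this]; ring
      · have hv : ¬ i.val = j.val := fun hv => h (Fin.ext hv)
        simp [h, hv]; ring
    have h2 : Mmat n P lam i.castSucc (Fin.last n) = lam i.val := by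
      simp only [Mmat, Matrix.of_apply, Fin.coe_castSucc, Fin.val_last]
      rw [if_neg (by omega), if_pos ⟨i.isLt, trivial⟩]
    rw [Finset.sum_congr rfl fun j _ => h1 j, h2, Finset.sum_sub_distrib,
      Finset.sum_ite_eq, ← Finset.sum_mul]
    simp [hB, ht]
    ring
  have inner2 : (Mmat n P lam *ᵥ x) (Fin.last n)
      = (∑ i : Fin n, lam i.val * x i.castSucc) + c * t := by
    simp only [Matrix.mulVec, dotProduct]
    rw [Fin.sum_univ_castSucc]
    have h1 : ∀ j : Fin n, Mmat n P lam (Fin.last n) j.castSucc * x j.castSucc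
        = lam j.val * x j.castSucc := by
      intro j
      simp only [Mmat, Matrix.of_apply, Fin.coe_castSucc, Fin.val_last]
      rw [if_neg (by omega), if_neg (by omega), if_pos ⟨trivial, j.isLt⟩]
    have h2 : Mmat n P lam (Fin.last n) (Fin.last n) = c := by
      simp [Mmat, hc]
    rw [Finset.sum_congr rfl fun j _ => h1 j, h2, ht]
  simp only [dotProduct, star_trivial, Pi.star_apply]
  rw [Fin.sum_univ_castSucc]
  rw [Finset.sum_congr rfl fun i _ => by rw [inner1 i], inner2]
  have expand : ∀ i : Fin n, x i.castSucc * (x i.castSucc - B / ((n:ℝ)+1) + lam i.val * t)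
      = x i.castSucc ^ 2 - x i.castSucc * (B / ((n:ℝ)+1)) + lam i.val * x i.castSucc * t := by
    intro i; ring
  rw [Finset.sum_congr rfl fun i _ => expand i, Finset.sum_add_distrib,
    Finset.sum_sub_distrib, ← Finset.sum_mul, ← Finset.sum_mul, ← hB]
  ring

/-- Converting the quadratic purity constraint into a linear matrix inequality via the Schur
complement: for `λ ∈ ℝ^n` (0-based `lam`), the inequality
`(1 - ∑_k λ_k)² + ∑_k λ_k² ≤ P` holds if and only if the `(n+1) × (n+1)` block matrix
`[[Q_n, λ], [λᵀ, P - 1 + 2 j_nᵀ λ]]`, with `Q_n = I_n - J_n/(n+1)`, is positive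
semidefinite. -/
theorem purity_constraint_iff_lmi (n : ℕ) (hn : 1 ≤ n) (P : ℝ) (lam : ℕ → ℝ) :
    ((1 - ∑ k ∈ Finset.range n, lam k) ^ 2 +
        ∑ k ∈ Finset.range n, (lam k) ^ 2 ≤ P) ↔
      Matrix.PosSemidef (Matrix.of fun p q : Fin (n + 1) =>
        if p.val < n ∧ q.val < n then
          (if p.val = q.val then (1 : ℝ) else 0) - 1 / ((n : ℝ) + 1)
        else if p.val < n ∧ q.val = n then lam p.val
        else if p.val = n ∧ q.val < n then lam q.val
        else P - 1 + 2 * ∑ k ∈ Finset.range n, lam k) := by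
  have hsF : (∑ i : Fin n, lam i.val) = ∑ k ∈ Finset.range n, lam k :=
    Fin.sum_univ_eq_sum_range (fun k => lam k) n
  have hDF : (∑ i : Fin n, lam i.val ^ 2) = ∑ k ∈ Finset.range n, lam k ^ 2 :=
    Fin.sum_univ_eq_sum_range (fun k => lam k ^ 2) n
  set s : ℝ := ∑ k ∈ Finset.range n, lam k with hs
  set D : ℝ := ∑ k ∈ Finset.range n, lam k ^ 2 with hD
  show _ ↔ Matrix.PosSemidef (Mmat n P lam)
  constructor
  · intro h
    refine Matrix.PosSemidef.of_dotProduct_mulVec_nonneg (Mmat_herm n P lam) fun x => ?_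
    rw [Mmat_form]
    have hc : (∑ i : Fin n, lam i.val) ^ 2 + ∑ i : Fin n, lam i.val ^ 2
        ≤ P - 1 + 2 * s := by
      rw [hsF, hDF]
      nlinarith [h]
    exact quad_nonneg_aux n (fun i => lam i.val) (P - 1 + 2 * s) (x (Fin.last n))
      (fun i => x i.castSucc) hc
  · rw [Matrix.posSemidef_iff_dotProduct_mulVec]; rintro ⟨-, hq⟩
    set x : Fin (n+1) → ℝ := fun p => if p.val < n then lam p.val + s else -1 with hx
    have hx1 : ∀ i : Fin n, x i.castSucc = lam i.val + s := by
      intro i; simp [hx, i.isLt]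
    have hx2 : x (Fin.last n) = -1 := by simp [hx]
    have h0 := hq x
    rw [Mmat_form] at h0
    rw [show (∑ i : Fin n, x i.castSucc ^ 2) = ∑ i : Fin n, (lam i.val + s) ^ 2 from
        Finset.sum_congr rfl fun i _ => by rw [hx1 i],
      show (∑ i : Fin n, x i.castSucc) = ∑ i : Fin n, (lam i.val + s) from
        Finset.sum_congr rfl fun i _ => by rw [hx1 i],
      show (∑ i : Fin n, lam i.val * x i.castSucc) = ∑ i : Fin n, lam i.val * (lam i.val + s) from
        Finset.sum_congr rfl fun i _ => by rw [hx1 i], hx2] at h0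
    have e1 : (∑ i : Fin n, (lam i.val + s) ^ 2) = D + 2 * s * s + n * s ^ 2 := by
      have : ∀ i : Fin n, (lam i.val + s) ^ 2 = lam i.val ^ 2 + 2 * s * lam i.val + s ^ 2 := by
        intro i; ring
      rw [Finset.sum_congr rfl fun i _ => this i]
      simp only [Finset.sum_add_distrib, ← Finset.mul_sum, Finset.sum_const, card_univ,
        Fintype.card_fin, nsmul_eq_mul, hsF, hDF]
    have e2 : (∑ i : Fin n, (lam i.val + s)) = s + n * s := by
      simp only [Finset.sum_add_distrib, Finset.sum_const, card_univ,
        Fintype.card_fin, nsmul_eq_mul, hsF]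
    have e3 : (∑ i : Fin n, lam i.val * (lam i.val + s)) = D + s * s := by
      have : ∀ i : Fin n, lam i.val * (lam i.val + s) = lam i.val ^ 2 + s * lam i.val := by
        intro i; ring
      rw [Finset.sum_congr rfl fun i _ => this i]
      simp only [Finset.sum_add_distrib, ← Finset.mul_sum, Finset.sum_const, hsF, hDF]
    rw [e1, e2, e3] at h0
    have hdiv : (s + (n : ℝ) * s) ^ 2 / ((n : ℝ) + 1) = ((n : ℝ) + 1) * s ^ 2 := by
      have hn1 : ((n : ℝ) + 1) ≠ 0 := by positivity
      field_simp
      ring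
    rw [hdiv] at h0
    nlinarith [h0]
end
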